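/- Under the hypotheses of the preceding abstract setting, the Lie algebra h = span{Id, a(S^k ζ), a*(S^k ζ), N, Λ, Δ_G, Δ_G(S) : k ≥ 0} is solvable: h⁽¹⁾ ⊆ span{Id, a(S^k ζ), a*(S^k ζ), Δ_G, Δ_G(S) : k ≥ 0}, h⁽²⁾ ⊆ span{Id, a(S^k ζ) : k ≥ 0}, and h⁽³⁾ = 0. -/

import Mathlib

/-- In the abstract white-noise setting, the Lie algebra
`h = span{Id, a(S^k ζ), a*(S^k ζ), N, Λ, Δ_G, Δ_G(S) : k ≥ 0}` is solvable:
`h⁽¹⁾ ⊆ span{Id, a(S^k ζ), a*(S^k ζ), Δ_G, Δ_G(S)}`,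
`h⁽²⁾ ⊆ span{Id, a(S^k ζ)}`, and `h⁽³⁾ = 0`. -/
theorem orbit_lie_algebra_solvable
    (A : Type*) [Ring A] [Algebra ℂ A]
    (E : Type*) [AddCommGroup E] [Module ℂ E]
    (B : E →ₗ[ℂ] E →ₗ[ℂ] ℂ) (S : E →ₗ[ℂ] E)
    (hSskew : ∀ ξ η : E, B (S ξ) η = - B ξ (S η))
    (a a' : E →ₗ[ℂ] A) (N Λ ΔG ΔGS : A) (ζ : E)
    (hζ : B ζ ζ ≠ 0)
    (r1 : ∀ ξ η : E, ⁅a ξ, a' η⁆ = (B ξ η) • (1 : A))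
    (r2 : ∀ ξ : E, ⁅a ξ, N⁆ = a ξ)
    (r3 : ∀ ξ : E, ⁅a' ξ, N⁆ = -(a' ξ))
    (r4 : ⁅N, Λ⁆ = 0)
    (r5 : ∀ ξ : E, ⁅a' ξ, Λ⁆ = a' (S ξ))
    (r6 : ∀ ξ : E, ⁅a ξ, Λ⁆ = -(a (S ξ)))
    (r7 : ∀ ξ : E, ⁅a ξ, ΔG⁆ = 0)
    (r8 : ∀ ξ : E, ⁅a' ξ, ΔG⁆ = -((2 : ℂ) • a ξ))
    (r9 : ∀ ξ : E, ⁅a' ξ, ΔGS⁆ = 0)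
    (r10 : ∀ ξ : E, ⁅a ξ, ΔGS⁆ = 0)
    (r11 : ⁅ΔG, N⁆ = (2 : ℂ) • ΔG)
    (r12 : ⁅N, ΔGS⁆ = -((2 : ℂ) • ΔGS))
    (r13 : ⁅ΔG, ΔGS⁆ = 0)
    (r14 : ⁅ΔG, Λ⁆ = (2 : ℂ) • ΔGS)
    (r15 : ⁅ΔGS, Λ⁆ = 0)
    (r16 : ∀ ξ η : E, ⁅a ξ, a η⁆ = 0)
    (r17 : ∀ ξ η : E, ⁅a' ξ, a' η⁆ = 0)
    (hset : Set A)
    (hhset : hset = ({1, N, Λ, ΔG, ΔGS} : Set A) ∪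
      Set.range (fun k : ℕ => a ((S ^ k) ζ)) ∪
      Set.range (fun k : ℕ => a' ((S ^ k) ζ)))
    (D1 : Submodule ℂ A)
    (hD1 : D1 = Submodule.span ℂ (Set.image2 (fun x y => ⁅x, y⁆)
      ((Submodule.span ℂ hset : Submodule ℂ A) : Set A)
      ((Submodule.span ℂ hset : Submodule ℂ A) : Set A)))
    (D2 : Submodule ℂ A)
    (hD2 : D2 = Submodule.span ℂ
      (Set.image2 (fun x y => ⁅x, y⁆) (D1 : Set A) (D1 : Set A)))
    (D3 : Submodule ℂ A)
    (hD3 : D3 = Submodule.span ℂ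
      (Set.image2 (fun x y => ⁅x, y⁆) (D2 : Set A) (D2 : Set A))) :
    D1 ≤ Submodule.span ℂ (({1, ΔG, ΔGS} : Set A) ∪
      Set.range (fun k : ℕ => a ((S ^ k) ζ)) ∪
      Set.range (fun k : ℕ => a' ((S ^ k) ζ))) ∧
    D2 ≤ Submodule.span ℂ (({1} : Set A) ∪
      Set.range (fun k : ℕ => a ((S ^ k) ζ))) ∧
    D3 = ⊥ := by

  subst hhset hD1 hD2 hD3
  letI : LieRing A := LieRing.ofAssociativeRing
  -- the bracket as a bilinear map
  let f : A →ₗ[ℂ] A →ₗ[ℂ] A :=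
    LinearMap.mk₂ ℂ (fun x y => ⁅x, y⁆) add_lie smul_lie lie_add lie_smul
  have key : ∀ (s : Set A) (M : Submodule ℂ A),
      (∀ x ∈ s, ∀ y ∈ s, ⁅x, y⁆ ∈ M) →
      Submodule.span ℂ (Set.image2 (fun x y => ⁅x, y⁆)
        ((Submodule.span ℂ s : Submodule ℂ A) : Set A)
        ((Submodule.span ℂ s : Submodule ℂ A) : Set A)) ≤ M := by
    intro s M h
    have e1 : (fun x y : A => ⁅x, y⁆) = fun x y => f x y := rfl
    rw [e1, ← Submodule.map₂_eq_span_image2, Submodule.map₂_span_span,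
      Submodule.span_le]
    exact Set.image2_subset_iff.2 h
  -- derived/skew bracket relations
  have c1 : ∀ x : A, ⁅(1 : A), x⁆ = 0 := fun x => by simp [Ring.lie_def]
  have c1' : ∀ x : A, ⁅x, (1 : A)⁆ = 0 := fun x => by simp [Ring.lie_def]
  have hpow : ∀ k : ℕ, S ((S ^ k) ζ) = (S ^ (k + 1)) ζ := fun k => by
    rw [pow_succ', Module.End.mul_apply]
  have s1 : ∀ ξ η : E, ⁅a' η, a ξ⁆ = -((B ξ η) • (1 : A)) := fun ξ η => by
    rw [← lie_skew, r1]
  have s2 : ∀ ξ : E, ⁅N, a ξ⁆ = -(a ξ) := fun ξ => by rw [← lie_skew, r2]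
  have s3 : ∀ ξ : E, ⁅N, a' ξ⁆ = a' ξ := fun ξ => by rw [← lie_skew, r3, neg_neg]
  have s4 : ⁅Λ, N⁆ = 0 := by rw [← lie_skew, r4, neg_zero]
  have s5 : ∀ ξ : E, ⁅Λ, a' ξ⁆ = -(a' (S ξ)) := fun ξ => by rw [← lie_skew, r5]
  have s6 : ∀ ξ : E, ⁅Λ, a ξ⁆ = a (S ξ) := fun ξ => by rw [← lie_skew, r6, neg_neg]
  have s7 : ∀ ξ : E, ⁅ΔG, a ξ⁆ = 0 := fun ξ => by rw [← lie_skew, r7, neg_zero]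
  have s8 : ∀ ξ : E, ⁅ΔG, a' ξ⁆ = (2 : ℂ) • a ξ := fun ξ => by
    rw [← lie_skew, r8, neg_neg]
  have s9 : ∀ ξ : E, ⁅ΔGS, a' ξ⁆ = 0 := fun ξ => by rw [← lie_skew, r9, neg_zero]
  have s10 : ∀ ξ : E, ⁅ΔGS, a ξ⁆ = 0 := fun ξ => by rw [← lie_skew, r10, neg_zero]
  have s11 : ⁅N, ΔG⁆ = -((2 : ℂ) • ΔG) := by rw [← lie_skew, r11]
  have s12 : ⁅ΔGS, N⁆ = (2 : ℂ) • ΔGS := by rw [← lie_skew, r12, neg_neg]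
  have s13 : ⁅ΔGS, ΔG⁆ = 0 := by rw [← lie_skew, r13, neg_zero]
  have s14 : ⁅Λ, ΔG⁆ = -((2 : ℂ) • ΔGS) := by rw [← lie_skew, r14]
  have s15 : ⁅Λ, ΔGS⁆ = 0 := by rw [← lie_skew, r15, neg_zero]
  -- target spans
  set M1 : Submodule ℂ A := Submodule.span ℂ (({1, ΔG, ΔGS} : Set A) ∪
      Set.range (fun k : ℕ => a ((S ^ k) ζ)) ∪
      Set.range (fun k : ℕ => a' ((S ^ k) ζ))) with hM1
  set M2 : Submodule ℂ A := Submodule.span ℂ (({1} : Set A) ∪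
      Set.range (fun k : ℕ => a ((S ^ k) ζ))) with hM2
  have m1one : (1 : A) ∈ M1 := Submodule.subset_span (by simp)
  have m1G : ΔG ∈ M1 := Submodule.subset_span (by simp)
  have m1GS : ΔGS ∈ M1 := Submodule.subset_span (by simp)
  have m1a : ∀ k : ℕ, a ((S ^ k) ζ) ∈ M1 := fun k =>
    Submodule.subset_span (Set.mem_union_left _ (Set.mem_union_right _ ⟨k, rfl⟩))
  have m1a' : ∀ k : ℕ, a' ((S ^ k) ζ) ∈ M1 := fun k =>
    Submodule.subset_span (Set.mem_union_right _ ⟨k, rfl⟩)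
  have m2one : (1 : A) ∈ M2 := Submodule.subset_span (by simp)
  have m2a : ∀ k : ℕ, a ((S ^ k) ζ) ∈ M2 := fun k =>
    Submodule.subset_span (Set.mem_union_right _ ⟨k, rfl⟩)
  -- step 1
  have step1 : ∀ x ∈ (({1, N, Λ, ΔG, ΔGS} : Set A) ∪
      Set.range (fun k : ℕ => a ((S ^ k) ζ)) ∪
      Set.range (fun k : ℕ => a' ((S ^ k) ζ))),
      ∀ y ∈ (({1, N, Λ, ΔG, ΔGS} : Set A) ∪
      Set.range (fun k : ℕ => a ((S ^ k) ζ)) ∪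
      Set.range (fun k : ℕ => a' ((S ^ k) ζ))), ⁅x, y⁆ ∈ M1 := by
    intro x hx y hy
    simp only [Set.mem_union, Set.mem_insert_iff, Set.mem_singleton_iff,
      Set.mem_range] at hx hy
    rcases hx with ((rfl | rfl | rfl | rfl | rfl) | ⟨k, rfl⟩) | ⟨k, rfl⟩ <;>
      rcases hy with ((rfl | rfl | rfl | rfl | rfl) | ⟨j, rfl⟩) | ⟨j, rfl⟩ <;>
      simp only [c1, c1', lie_self, r1, r2, r3, r4, r5, r6, r7, r8, r9, r10,
        r11, r12, r13, r14, r15, r16, r17, s1, s2, s3, s4, s5, s6, s7, s8, s9,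
        s10, s11, s12, s13, s14, s15, hpow] <;>
      first
        | exact Submodule.zero_mem _
        | exact m1one
        | exact m1a _
        | exact m1a' _
        | exact Submodule.neg_mem _ (m1a _)
        | exact Submodule.neg_mem _ (m1a' _)
        | exact Submodule.smul_mem _ _ m1G
        | exact Submodule.neg_mem _ (Submodule.smul_mem _ _ m1G)
        | exact Submodule.smul_mem _ _ m1GS
        | exact Submodule.neg_mem _ (Submodule.smul_mem _ _ m1GS)
        | exact Submodule.smul_mem _ _ m1one
        | exact Submodule.neg_mem _ (Submodule.smul_mem _ _ m1one)
        | exact Submodule.smul_mem _ _ (m1a _)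
        | exact Submodule.neg_mem _ (Submodule.smul_mem _ _ (m1a _))
  have hle1 : Submodule.span ℂ (Set.image2 (fun x y => ⁅x, y⁆)
      ((Submodule.span ℂ (({1, N, Λ, ΔG, ΔGS} : Set A) ∪
        Set.range (fun k : ℕ => a ((S ^ k) ζ)) ∪
        Set.range (fun k : ℕ => a' ((S ^ k) ζ))) : Submodule ℂ A) : Set A)
      ((Submodule.span ℂ (({1, N, Λ, ΔG, ΔGS} : Set A) ∪
        Set.range (fun k : ℕ => a ((S ^ k) ζ)) ∪
        Set.range (fun k : ℕ => a' ((S ^ k) ζ))) : Submodule ℂ A) : Set A)) ≤ M1 :=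
    key _ _ step1
  -- step 2 generators
  have step2 : ∀ x ∈ (({1, ΔG, ΔGS} : Set A) ∪
      Set.range (fun k : ℕ => a ((S ^ k) ζ)) ∪
      Set.range (fun k : ℕ => a' ((S ^ k) ζ))),
      ∀ y ∈ (({1, ΔG, ΔGS} : Set A) ∪
      Set.range (fun k : ℕ => a ((S ^ k) ζ)) ∪
      Set.range (fun k : ℕ => a' ((S ^ k) ζ))), ⁅x, y⁆ ∈ M2 := by
    intro x hx y hy
    simp only [Set.mem_union, Set.mem_insert_iff, Set.mem_singleton_iff,
      Set.mem_range] at hx hy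
    rcases hx with ((rfl | rfl | rfl) | ⟨k, rfl⟩) | ⟨k, rfl⟩ <;>
      rcases hy with ((rfl | rfl | rfl) | ⟨j, rfl⟩) | ⟨j, rfl⟩ <;>
      simp only [c1, c1', lie_self, r1, r7, r8, r9, r10, r13, r16, r17,
        s1, s7, s8, s9, s10, s13] <;>
      first
        | exact Submodule.zero_mem _
        | exact Submodule.smul_mem _ _ m2one
        | exact Submodule.neg_mem _ (Submodule.smul_mem _ _ m2one)
        | exact Submodule.smul_mem _ _ (m2a _)
        | exact Submodule.neg_mem _ (Submodule.smul_mem _ _ (m2a _))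
  have step3 : ∀ x ∈ (({1} : Set A) ∪
      Set.range (fun k : ℕ => a ((S ^ k) ζ))),
      ∀ y ∈ (({1} : Set A) ∪
      Set.range (fun k : ℕ => a ((S ^ k) ζ))), ⁅x, y⁆ ∈ (⊥ : Submodule ℂ A) := by
    intro x hx y hy
    simp only [Set.mem_union, Set.mem_singleton_iff, Set.mem_range] at hx hy
    rcases hx with rfl | ⟨k, rfl⟩ <;> rcases hy with rfl | ⟨j, rfl⟩ <;>
      simp only [c1, c1', r16, Submodule.mem_bot]
  have hle2 : Submodule.span ℂ (Set.image2 (fun x y : A => ⁅x, y⁆)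
      ((Submodule.span ℂ (Set.image2 (fun x y : A => ⁅x, y⁆)
        ((Submodule.span ℂ (({1, N, Λ, ΔG, ΔGS} : Set A) ∪
          Set.range (fun k : ℕ => a ((S ^ k) ζ)) ∪
          Set.range (fun k : ℕ => a' ((S ^ k) ζ))) : Submodule ℂ A) : Set A)
        ((Submodule.span ℂ (({1, N, Λ, ΔG, ΔGS} : Set A) ∪
          Set.range (fun k : ℕ => a ((S ^ k) ζ)) ∪
          Set.range (fun k : ℕ => a' ((S ^ k) ζ))) : Submodule ℂ A) : Set A)) :
        Submodule ℂ A) : Set A)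
      ((Submodule.span ℂ (Set.image2 (fun x y : A => ⁅x, y⁆)
        ((Submodule.span ℂ (({1, N, Λ, ΔG, ΔGS} : Set A) ∪
          Set.range (fun k : ℕ => a ((S ^ k) ζ)) ∪
          Set.range (fun k : ℕ => a' ((S ^ k) ζ))) : Submodule ℂ A) : Set A)
        ((Submodule.span ℂ (({1, N, Λ, ΔG, ΔGS} : Set A) ∪
          Set.range (fun k : ℕ => a ((S ^ k) ζ)) ∪
          Set.range (fun k : ℕ => a' ((S ^ k) ζ))) : Submodule ℂ A) : Set A)) :
        Submodule ℂ A) : Set A)) ≤ M2 :=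
    le_trans (Submodule.span_mono (Set.image2_subset
      (fun z hz => hle1 hz) (fun z hz => hle1 hz))) (key _ _ step2)
  refine ⟨hle1, hle2, ?_⟩
  refine le_bot_iff.mp (le_trans (Submodule.span_mono (Set.image2_subset
    (fun z hz => hle2 hz) (fun z hz => hle2 hz))) (key _ _ step3))
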